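/- Let p(n) ∈ ℝ^d be a point whose coordinates are rational functions of n with rational coefficients. Then there exists a positive integer π such that for each residue a mod π, either p(πn+a) ∉ ℤ^d for all sufficiently large n, or there is an integer polynomial vector q ∈ (ℤ[X])^d with p(πn+a) = q(n) for all sufficiently large n. -/

import Mathlib

open Polynomial Filter

/-- decomposition of a rational function into polynomial part plus small tail -/
lemma myDecomp (f : ℕ → ℝ) (hf : ∃ p q : Polynomial ℚ, ∃ N : ℕ, ∀ n ≥ N,
    ((q.eval (n : ℚ) : ℚ) : ℝ) ≠ 0 ∧
      f n = ((p.eval (n : ℚ) : ℚ) : ℝ) / ((q.eval (n : ℚ) : ℚ) : ℝ)) :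
    ∃ (s u q : Polynomial ℚ) (N : ℕ), u.degree < q.degree ∧
      ∀ n : ℕ, n ≥ N → ((q.eval (n:ℚ) : ℚ) : ℝ) ≠ 0 ∧
        f n = ((s.eval (n:ℚ) : ℚ) : ℝ) + ((u.eval (n:ℚ) : ℚ) : ℝ) / ((q.eval (n:ℚ) : ℚ) : ℝ) := by
  obtain ⟨P, Q, N, h⟩ := hf
  have hQ0 : Q ≠ 0 := by
    intro h0
    exact (h N le_rfl).1 (by simp [h0])
  set c := Q.leadingCoeff with hc
  have hc0 : c ≠ 0 := leadingCoeff_ne_zero.mpr hQ0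
  set Q' := Q * C c⁻¹ with hQ'
  have hmonic : Q'.Monic := monic_mul_leadingCoeff_inv hQ0
  set P' := P * C c⁻¹ with hP'
  refine ⟨P' /ₘ Q', P' %ₘ Q', Q', N, degree_modByMonic_lt P' hmonic, ?_⟩
  intro n hn
  obtain ⟨hqne, hfn⟩ := h n hn
  have hqQ : Q.eval (n:ℚ) ≠ 0 := fun h0 => hqne (by rw [h0]; simp)
  have hq'ne : Q'.eval (n:ℚ) ≠ 0 := by
    rw [hQ', eval_mul, eval_C]
    exact mul_ne_zero hqQ (inv_ne_zero hc0)
  refine ⟨by simpa using hq'ne, ?_⟩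
  rw [hfn]
  have hPP : (P' %ₘ Q').eval (n:ℚ) + Q'.eval (n:ℚ) * (P' /ₘ Q').eval (n:ℚ)
      = P'.eval (n:ℚ) := by
    rw [← eval_mul, ← eval_add, modByMonic_add_div P' Q']
  have hPval : P'.eval (n:ℚ) = P.eval (n:ℚ) * c⁻¹ := by rw [hP', eval_mul, eval_C]
  have hQval : Q'.eval (n:ℚ) = Q.eval (n:ℚ) * c⁻¹ := by rw [hQ', eval_mul, eval_C]
  have key : P.eval (n:ℚ) / Q.eval (n:ℚ)
      = (P' /ₘ Q').eval (n:ℚ) + (P' %ₘ Q').eval (n:ℚ) / Q'.eval (n:ℚ) := by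
    calc P.eval (n:ℚ) / Q.eval (n:ℚ) = P'.eval (n:ℚ) / Q'.eval (n:ℚ) := by
          rw [hPval, hQval, mul_div_mul_right _ _ (inv_ne_zero hc0)]
      _ = ((P' %ₘ Q').eval (n:ℚ) + Q'.eval (n:ℚ) * (P' /ₘ Q').eval (n:ℚ)) / Q'.eval (n:ℚ) := by
          rw [hPP]
      _ = _ := by field_simp; ring
  rw [← Rat.cast_div, key, Rat.cast_add, Rat.cast_div]

noncomputable def polyDen (s : Polynomial ℚ) : ℕ := s.support.prod fun k => (s.coeff k).den

lemma polyDen_pos (s : Polynomial ℚ) : 0 < polyDen s :=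
  Finset.prod_pos fun k _ => (s.coeff k).pos

lemma exists_intPoly (s : Polynomial ℚ) (m : ℕ) (hm : polyDen s ∣ m) :
    ∃ T : Polynomial ℤ, T.map (Int.castRingHom ℚ) = C (m:ℚ) * s := by
  have : (C (m:ℚ) * s) ∈ lifts (Int.castRingHom ℚ) := by
    rw [lifts_iff_coeff_lifts]
    intro k
    rw [coeff_C_mul]
    by_cases hk : k ∈ s.support
    · have hden : ((s.coeff k).den : ℤ) ∣ (m:ℤ) := by
        exact_mod_cast (Finset.dvd_prod_of_mem (fun k => (s.coeff k).den) hk).trans hm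
      obtain ⟨e, he⟩ := hden
      refine ⟨e * (s.coeff k).num, ?_⟩
      have h1 : ((s.coeff k).den : ℚ) * s.coeff k = (s.coeff k).num := Rat.den_mul_eq_num _
      have hm' : (m:ℚ) = ((s.coeff k).den : ℚ) * (e:ℚ) := by exact_mod_cast he
      simp only [eq_intCast]
      push_cast
      rw [← h1, hm']
      ring
    · simp only [notMem_support_iff] at hk
      exact ⟨0, by simp [hk]⟩
  rwa [mem_lifts] at this

lemma comp_map_eq (π : ℕ) (T : Polynomial ℤ) (a : ℤ) :
    (T.comp (C (π:ℤ) * X + C a)).map (Int.castRingHom (ZMod π))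
      = C ((T.eval a : ℤ) : ZMod π) := by
  rw [Polynomial.map_comp]
  have : (C (π:ℤ) * X + C a).map (Int.castRingHom (ZMod π)) = C ((a:ℤ) : ZMod π) := by
    simp [Polynomial.map_add, Polynomial.map_mul, map_C, map_X]
  rw [this, comp_C]
  congr 1
  have := Polynomial.eval_intCast_map (Int.castRingHom (ZMod π)) T a
  simp only [eq_intCast, Int.cast_id] at this
  exact this

lemma comp_coeff_dvd (π : ℕ) (T : Polynomial ℤ) (a : ℤ) (k : ℕ) (hk : k ≠ 0) :
    (π:ℤ) ∣ (T.comp (C (π:ℤ) * X + C a)).coeff k := by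
  rw [← ZMod.intCast_zmod_eq_zero_iff_dvd]
  have h1 : (((T.comp (C (π:ℤ) * X + C a)).coeff k : ℤ) : ZMod π)
      = ((T.comp (C (π:ℤ) * X + C a)).map (Int.castRingHom (ZMod π))).coeff k := by
    simp [coeff_map]
  rw [h1, comp_map_eq, coeff_C, if_neg hk]

lemma comp_eval_dvd (π : ℕ) (T : Polynomial ℤ) (a n : ℤ) :
    (π:ℤ) ∣ (T.comp (C (π:ℤ) * X + C a)).eval n - T.eval a := by
  rw [← ZMod.intCast_zmod_eq_zero_iff_dvd]
  push_cast
  have h1 : (((T.comp (C (π:ℤ) * X + C a)).eval n : ℤ) : ZMod π)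
      = ((T.comp (C (π:ℤ) * X + C a)).map (Int.castRingHom (ZMod π))).eval ((n:ℤ) : ZMod π) := by
    rw [Polynomial.eval_intCast_map]
    simp
  rw [h1, comp_map_eq]
  simp

lemma eventually_eval_ne (u : Polynomial ℚ) (hu : u ≠ 0) :
    ∃ B : ℕ, ∀ m : ℕ, m ≥ B → u.eval (m:ℚ) ≠ 0 := by
  have hfin : {x : ℚ | u.IsRoot x}.Finite := finite_setOf_isRoot hu
  have hbad : {m : ℕ | u.eval (m:ℚ) = 0}.Finite := by
    have : {m : ℕ | u.eval (m:ℚ) = 0} = (fun m : ℕ => (m:ℚ)) ⁻¹' {x : ℚ | u.IsRoot x} := rfl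
    rw [this]
    exact Set.Finite.preimage (Nat.cast_injective.injOn) hfin
  obtain ⟨B, hB⟩ := hbad.bddAbove
  refine ⟨B + 1, fun m hm h0 => ?_⟩
  have := hB h0
  omega

/-- `f` eventually agrees with a quotient of polynomials with rational coefficients,
with eventually nonvanishing denominator. -/
def IsRatFuncQ (f : ℕ → ℝ) : Prop :=
  ∃ p q : Polynomial ℚ, ∃ N : ℕ, ∀ n ≥ N,
    ((q.eval (n : ℚ) : ℚ) : ℝ) ≠ 0 ∧
      f n = ((p.eval (n : ℚ) : ℚ) : ℝ) / ((q.eval (n : ℚ) : ℚ) : ℝ)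

/-- For a point `p(n) ∈ ℝ^d` with rational-function coordinates there is a period `π`
such that on each residue class mod `π`, either `p(πn+a)` is eventually never an
integer point, or `p(πn+a)` is eventually given by a vector of integer polynomials. -/
theorem stmt_13 (d : ℕ) (p : ℕ → Fin d → ℝ)
    (hp : ∀ j, IsRatFuncQ (fun n => p n j)) :
    ∃ π : ℕ, 0 < π ∧ ∀ a : ℕ,
      (∃ N : ℕ, ∀ n ≥ N, ¬ ∃ z : Fin d → ℤ, ∀ j, p (π * n + a) j = (z j : ℝ)) ∨
      (∃ q : Fin d → Polynomial ℤ, ∃ N : ℕ, ∀ n ≥ N, ∀ j,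
        p (π * n + a) j = (((q j).eval (n : ℤ) : ℤ) : ℝ)) := by
  choose s u q N hdeg hval using fun j => myDecomp _ (hp j)
  set π : ℕ := ∏ j : Fin d, polyDen (s j) with hπdef
  have hπ : 0 < π := Finset.prod_pos fun j _ => polyDen_pos _
  have hπQ : (π:ℚ) ≠ 0 := Nat.cast_ne_zero.mpr hπ.ne'
  choose T hT using fun j => exists_intPoly (s j) π
    (Finset.dvd_prod_of_mem _ (Finset.mem_univ j))
  have hTs : ∀ j (m : ℕ), (((T j).eval ((m:ℕ):ℤ) : ℤ) : ℚ) = (π:ℚ) * (s j).eval (m:ℚ) := by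
    intro j m
    have h0 := Polynomial.eval_natCast_map (Int.castRingHom ℚ) (T j) m
    rw [hT j] at h0
    simp only [eq_intCast, eval_mul, eval_C] at h0
    exact h0.symm
  refine ⟨π, hπ, fun a => ?_⟩
  set G : Fin d → Polynomial ℤ := fun j => (T j).comp (C (π:ℤ) * X + C (a:ℤ)) with hGdef
  have hπn : ∀ n : ℕ, n ≤ π * n + a := fun n =>
    le_trans (Nat.le_mul_of_pos_left n hπ) (Nat.le_add_right _ _)
  have hGeval : ∀ j (n : ℕ), (G j).eval ((n:ℕ):ℤ) = (T j).eval ((π * n + a : ℕ) : ℤ) := by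
    intro j n
    simp only [hGdef, eval_comp, eval_add, eval_mul, eval_C, eval_X]
    norm_cast
  have hS : ∀ j (n : ℕ), ∃ k : ℤ, (s j).eval ((π * n + a : ℕ) : ℚ)
      = (k : ℚ) + (((T j).eval (a:ℤ) : ℤ) : ℚ) / (π:ℚ) := by
    intro j n
    obtain ⟨k, hk⟩ := comp_eval_dvd π (T j) (a:ℤ) ((n:ℕ):ℤ)
    refine ⟨k, ?_⟩
    have hGk : (G j).eval ((n:ℕ):ℤ) = (T j).eval (a:ℤ) + (π:ℤ) * k := by
      simp only [hGdef]
      linarith [hk]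
    have h2 : (π:ℚ) * (s j).eval ((π*n+a:ℕ):ℚ)
        = (((T j).eval (a:ℤ) : ℤ) : ℚ) + (π:ℚ) * (k:ℚ) := by
      rw [← hTs j (π*n+a), ← hGeval j n, hGk]
      push_cast
      ring
    field_simp
    push_cast at h2 ⊢
    linear_combination h2
  by_cases hall : ∀ j, (π:ℤ) ∣ (T j).eval (a:ℤ) ∧ u j = 0
  · right
    choose z hz using fun j => (hall j).1
    set Q : Fin d → Polynomial ℤ := fun j =>
      C (z j) + ∑ k ∈ (Finset.range ((G j).natDegree + 1)).erase 0,
        C ((G j).coeff k / π) * X ^ k with hQdef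
    have hQeval : ∀ j (n : ℕ), (π:ℤ) * (Q j).eval ((n:ℕ):ℤ) = (G j).eval ((n:ℕ):ℤ) := by
      intro j n
      have hrhs : (G j).eval ((n:ℕ):ℤ)
          = ∑ k ∈ Finset.range ((G j).natDegree + 1), (G j).coeff k * ((n:ℕ):ℤ) ^ k :=
        eval_eq_sum_range _
      have hc0 : (G j).coeff 0 = (T j).eval (a:ℤ) := by
        rw [coeff_zero_eq_eval_zero]
        have := hGeval j 0
        simp only [Nat.cast_zero, mul_zero, Nat.mul_zero] at this
        rw [this]
        norm_num
      have hsplit : ∑ k ∈ Finset.range ((G j).natDegree + 1), (G j).coeff k * ((n:ℕ):ℤ) ^ k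
          = (G j).coeff 0 + ∑ k ∈ (Finset.range ((G j).natDegree + 1)).erase 0,
              (G j).coeff k * ((n:ℕ):ℤ) ^ k := by
        rw [← Finset.add_sum_erase _ _ (Finset.mem_range.mpr (Nat.succ_pos _))]
        norm_num
      rw [hrhs, hsplit, hc0, hz j, hQdef]
      simp only [eval_add, eval_C, eval_finset_sum, eval_mul, eval_pow, eval_X]
      rw [mul_add, Finset.mul_sum]
      congr 1
      refine Finset.sum_congr rfl fun k hk => ?_
      have hk0 : k ≠ 0 := (Finset.mem_erase.mp hk).1
      rw [← mul_assoc, Int.mul_ediv_cancel' (comp_coeff_dvd π (T j) (a:ℤ) k hk0)]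
    refine ⟨Q, Finset.univ.sup N, fun n hn j => ?_⟩
    have hnj : N j ≤ n := le_trans (Finset.le_sup (Finset.mem_univ j)) hn
    obtain ⟨hq0, hval'⟩ := hval j (π*n+a) (le_trans hnj (hπn n))
    have hu0 : (u j) = 0 := (hall j).2
    rw [hu0] at hval'
    simp only [eval_zero, Rat.cast_zero, zero_div, add_zero] at hval'
    have hQQ : (((Q j).eval ((n:ℕ):ℤ) : ℤ) : ℚ) = (s j).eval ((π*n+a:ℕ):ℚ) := by
      have h2 := hQeval j n
      have h3 := hGeval j n
      have h4 : (π:ℚ) * (((Q j).eval ((n:ℕ):ℤ) : ℤ) : ℚ)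
          = (π:ℚ) * (s j).eval ((π*n+a:ℕ):ℚ) := by
        rw [← hTs j (π*n+a), ← h3, ← h2]
        push_cast
        ring
      exact mul_left_cancel₀ hπQ h4
    show p (π*n+a) j = _
    rw [hval', ← hQQ]
    norm_cast
  · left
    push_neg at hall
    obtain ⟨j, hj⟩ := hall
    set c : ℤ := (T j).eval (a:ℤ) with hcdef
    have hE1 : ∀ᶠ n in atTop, (((q j).eval ((π*n+a:ℕ):ℚ) : ℚ) : ℝ) ≠ 0 ∧
        p (π*n+a) j = (((s j).eval ((π*n+a:ℕ):ℚ) : ℚ) : ℝ)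
          + (((u j).eval ((π*n+a:ℕ):ℚ) : ℚ) : ℝ) / (((q j).eval ((π*n+a:ℕ):ℚ) : ℚ) : ℝ) := by
      rw [eventually_atTop]
      exact ⟨N j, fun n hn => hval j (π*n+a) (le_trans hn (hπn n))⟩
    set t : ℕ → ℝ := fun n =>
      (((u j).eval ((π*n+a:ℕ):ℚ) : ℚ) : ℝ) / (((q j).eval ((π*n+a:ℕ):ℚ) : ℚ) : ℝ) with htdef
    have hT0 : Tendsto t atTop (nhds 0) := by
      set U := (u j).map (Rat.castHom ℝ) with hU
      set Qr := (q j).map (Rat.castHom ℝ) with hQr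
      have hdeg' : U.degree < Qr.degree := by
        rw [hU, hQr, degree_map_eq_of_injective (Rat.castHom ℝ).injective,
          degree_map_eq_of_injective (Rat.castHom ℝ).injective]
        exact hdeg j
      have htd : Tendsto (fun n : ℕ => ((π*n+a:ℕ) : ℝ)) atTop atTop :=
        tendsto_natCast_atTop_atTop.comp (tendsto_atTop_mono hπn tendsto_id)
      have h0 := Filter.Tendsto.comp (Polynomial.div_tendsto_zero_of_degree_lt U Qr hdeg') htd
      refine h0.congr fun n => ?_
      have e1 := Polynomial.eval_natCast_map (Rat.castHom ℝ) (u j) (π*n+a)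
      have e2 := Polynomial.eval_natCast_map (Rat.castHom ℝ) (q j) (π*n+a)
      simp only [Rat.coe_castHom] at e1 e2
      simp only [Function.comp_apply, htdef, ← hU, ← hQr, e1, e2]
      rw [hU, hQr, e1, e2]
    have habs : ∀ ε : ℝ, 0 < ε → ∀ᶠ n in atTop, |t n| < ε := by
      intro ε hε
      have := Metric.tendsto_nhds.mp hT0 ε hε
      simpa [Real.dist_eq] using this
    by_cases hdvd : (π:ℤ) ∣ c
    · have hu : u j ≠ 0 := hj hdvd
      obtain ⟨B, hB⟩ := eventually_eval_ne (u j) hu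
      obtain ⟨e, he⟩ := hdvd
      have hfin : ∀ᶠ n in atTop, ¬ ∃ z : Fin d → ℤ, ∀ j', p (π*n+a) j' = (z j' : ℝ) := by
        filter_upwards [hE1, habs 1 one_pos, eventually_ge_atTop B] with n h1 h2 h3
        rintro ⟨zv, hzv⟩
        have hune : (u j).eval ((π*n+a:ℕ):ℚ) ≠ 0 := hB (π*n+a) (le_trans h3 (hπn n))
        have ht0 : t n ≠ 0 := div_ne_zero (by exact_mod_cast Rat.cast_ne_zero.mpr hune) h1.1
        obtain ⟨k, hk⟩ := hS j n
        have hcπ : (c:ℚ) / (π:ℚ) = (e:ℚ) := by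
          rw [he]; push_cast; field_simp
        rw [← hcdef, hcπ] at hk
        have hps : p (π*n+a) j = ((k + e : ℤ):ℝ) + t n := by
          rw [h1.2, hk]
          congr 1
          push_cast
          ring
        rw [hzv j] at hps
        have htw : t n = ((zv j - (k + e) : ℤ) : ℝ) := by push_cast; push_cast at hps; linarith
        have hw0 : zv j - (k + e) ≠ 0 := by
          intro h0
          rw [h0] at htw
          simp at htw
          exact ht0 htw
        have h1w : (1:ℤ) ≤ |zv j - (k + e)| := Int.one_le_abs hw0
        have : (1:ℝ) ≤ |t n| := by
          rw [htw, ← Int.cast_abs]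
          exact_mod_cast h1w
        linarith [h2]
      rw [eventually_atTop] at hfin
      exact hfin
    · set r : ℤ := c % (π:ℤ) with hrdef
      have hr0 : 0 < r := by
        rcases (Int.emod_nonneg c (by exact_mod_cast hπ.ne' : (π:ℤ) ≠ 0)).lt_or_eq with h|h
        · exact h
        · exact absurd (Int.dvd_of_emod_eq_zero h.symm) hdvd
      have hrπ : r < (π:ℤ) := Int.emod_lt_of_pos c (by exact_mod_cast hπ)
      have hrR0 : (0:ℝ) < (r:ℝ)/(π:ℝ) := by
        apply div_pos
        · exact_mod_cast hr0
        · exact_mod_cast hπ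
      have hrR1 : (r:ℝ)/(π:ℝ) < 1 := by
        rw [div_lt_one (by exact_mod_cast hπ)]
        exact_mod_cast hrπ
      set ε : ℝ := min ((r:ℝ)/(π:ℝ)) (1 - (r:ℝ)/(π:ℝ)) with hεdef
      have hεpos : 0 < ε := lt_min hrR0 (by linarith)
      have hfin : ∀ᶠ n in atTop, ¬ ∃ z : Fin d → ℤ, ∀ j', p (π*n+a) j' = (z j' : ℝ) := by
        filter_upwards [hE1, habs ε hεpos] with n h1 h2
        rintro ⟨zv, hzv⟩
        obtain ⟨k, hk⟩ := hS j n
        have hediv : (π:ℤ) * (c / (π:ℤ)) + r = c := Int.mul_ediv_add_emod c (π:ℤ)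
        have hcπ : (c:ℚ) / (π:ℚ) = ((c / (π:ℤ) : ℤ):ℚ) + (r:ℚ)/(π:ℚ) := by
          have h5 : (c:ℚ) = (π:ℚ) * ((c/(π:ℤ) : ℤ):ℚ) + (r:ℚ) := by exact_mod_cast hediv.symm
          field_simp
          linear_combination h5
        rw [← hcdef, hcπ] at hk
        have hps : p (π*n+a) j = (((k + c / (π:ℤ) : ℤ):ℝ) + (r:ℝ)/(π:ℝ)) + t n := by
          rw [h1.2, hk]
          congr 1
          push_cast
          ring
        rw [hzv j] at hps
        set w : ℤ := zv j - (k + c / (π:ℤ)) with hwdef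
        have htw : t n = (w:ℝ) - (r:ℝ)/(π:ℝ) := by
          rw [hwdef]; push_cast; push_cast at hps; linarith
        rcases le_or_gt w 0 with hw|hw
        · have hwR : (w:ℝ) ≤ 0 := by exact_mod_cast hw
          have hT1 : t n ≤ -((r:ℝ)/(π:ℝ)) := by rw [htw]; linarith
          have := neg_abs_le (t n)
          have hεle : ε ≤ (r:ℝ)/(π:ℝ) := min_le_left _ _
          linarith [h2]
        · have hwR : (1:ℝ) ≤ (w:ℝ) := by exact_mod_cast hw
          have hT1 : 1 - (r:ℝ)/(π:ℝ) ≤ t n := by rw [htw]; linarith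
          have := le_abs_self (t n)
          have hεle : ε ≤ 1 - (r:ℝ)/(π:ℝ) := min_le_right _ _
          linarith [h2]
      rw [eventually_atTop] at hfin
      exact hfin
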